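/- For every real θ with |θ| < π one has limsup_{r→∞} log|ξ₁(r e^{iθ})| / (√r log r) ≤ (1/4) cos(θ/2); in other words, for |θ| < π, log|ξ₁(r e^{iθ})| ≤ (1/4)√r (log r) cos(θ/2) + o(√r log r) as r → ∞. -/

import Mathlib

open scoped Real

/-- The Riemann ξ-function: `ξ(s) = (1/2) s (s-1) π^(-s/2) Γ(s/2) ζ(s)`. -/
noncomputable def riemannXiFn (s : ℂ) : ℂ :=
  (1 / 2) * s * (s - 1) * (π : ℂ) ^ (-s / 2) * Complex.Gamma (s / 2) * riemannZeta s

lemma abs_Gamma_le {z : ℂ} (hz : 0 < z.re) :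
    ‖Complex.Gamma z‖ ≤ Real.Gamma z.re := by
  rw [Complex.Gamma_eq_integral hz, Real.Gamma_eq_integral hz, Complex.GammaIntegral]
  refine le_trans (MeasureTheory.norm_integral_le_integral_norm _) (le_of_eq ?_)
  refine MeasureTheory.setIntegral_congr_fun measurableSet_Ioi (fun x hx => ?_)
  rw [norm_mul, Complex.norm_cpow_eq_rpow_re_of_pos hx, Complex.norm_real, Real.norm_eq_abs,
    abs_of_nonneg (Real.exp_pos _).le, Complex.sub_re, Complex.one_re]

lemma Gamma_le_rpow_self {x : ℝ} (hx : 1 ≤ x) : Real.Gamma x ≤ x ^ x := by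
  have hx0 : (0:ℝ) < x := lt_of_lt_of_le one_pos hx
  set n : ℕ := ⌊x⌋₊ with hn
  have hn1 : 1 ≤ n := Nat.le_floor (by exact_mod_cast hx)
  have hnx : (n:ℝ) ≤ x := Nat.floor_le hx0.le
  have hxn : x ≤ (n:ℝ) + 1 := (Nat.lt_floor_add_one x).le
  clear_value n
  have hnpos : (0:ℝ) < n := by exact_mod_cast hn1
  have hseg : x ∈ segment ℝ ((n:ℝ)) ((n:ℝ)+1) := by
    rw [segment_eq_Icc (by linarith)]
    exact ⟨hnx, hxn⟩
  have hconv := Real.convexOn_log_Gamma.le_on_segment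
    (Set.mem_Ioi.mpr hnpos) (Set.mem_Ioi.mpr (by linarith)) hseg
  have hGpos : 0 < Real.Gamma x := Real.Gamma_pos_of_pos hx0
  have hGn : 0 < Real.Gamma n := Real.Gamma_pos_of_pos hnpos
  have hGn1 : 0 < Real.Gamma ((n:ℝ)+1) := Real.Gamma_pos_of_pos (by linarith)
  have hmax : Real.Gamma x ≤ max (Real.Gamma n) (Real.Gamma ((n:ℝ)+1)) := by
    have := hconv
    simp only [Function.comp] at this
    rcases le_total (Real.log (Real.Gamma n)) (Real.log (Real.Gamma ((n:ℝ)+1))) with h | h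
    · rw [max_eq_right h] at this
      have := Real.exp_le_exp.mpr this
      rw [Real.exp_log hGpos, Real.exp_log hGn1] at this
      exact this.trans (le_max_right _ _)
    · rw [max_eq_left h] at this
      have := Real.exp_le_exp.mpr this
      rw [Real.exp_log hGpos, Real.exp_log hGn] at this
      exact this.trans (le_max_left _ _)
  have hfac : max (Real.Gamma n) (Real.Gamma ((n:ℝ)+1)) ≤ (n.factorial : ℝ) := by
    have h1 : Real.Gamma ((n:ℝ)+1) = (n.factorial : ℝ) := Real.Gamma_nat_eq_factorial n
    have h2 : Real.Gamma n = ((n-1).factorial : ℝ) := by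
      obtain ⟨m, rfl⟩ : ∃ m, n = m + 1 := ⟨n - 1, (Nat.succ_pred_eq_of_pos hn1).symm⟩
      push_cast
      rw [Real.Gamma_nat_eq_factorial m]
    rw [max_le_iff, h1, h2]
    exact ⟨by exact_mod_cast Nat.factorial_le (Nat.sub_le n 1), le_refl _⟩
  have h3 : (n.factorial : ℝ) ≤ (n:ℝ) ^ (n:ℕ) := by exact_mod_cast Nat.factorial_le_pow n
  have h4 : (n:ℝ) ^ (n:ℕ) ≤ x ^ x := by
    rw [← Real.rpow_natCast (n:ℝ) n]
    calc (n:ℝ) ^ (n:ℝ) ≤ x ^ (n:ℝ) := Real.rpow_le_rpow hnpos.le hnx (by positivity)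
      _ ≤ x ^ x := Real.rpow_le_rpow_of_exponent_le hx hnx
  linarith [hmax.trans (hfac.trans (h3.trans h4))]

lemma abs_zeta_le {s : ℂ} (hs : 2 ≤ s.re) : ‖riemannZeta s‖ ≤ 2 := by
  have hs1 : 1 < s.re := by linarith
  rw [zeta_eq_tsum_one_div_nat_add_one_cpow hs1]
  have hterm : ∀ n : ℕ, ‖(1 : ℂ) / ((n:ℂ) + 1) ^ s‖ = 1 / ((n:ℝ) + 1) ^ s.re := by
    intro n
    rw [norm_div, norm_one]
    have hpos : (0:ℝ) < (n:ℝ) + 1 := by positivity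
    rw [show ((n:ℂ) + 1) = (((n:ℝ) + 1 : ℝ) : ℂ) by push_cast; ring,
      Complex.norm_cpow_eq_rpow_re_of_pos hpos]
  have hle : ∀ n : ℕ, 1 / ((n:ℝ) + 1) ^ s.re ≤ 1 / ((n:ℝ) + 1) ^ (2:ℝ) := by
    intro n
    have h1 : (1:ℝ) ≤ (n:ℝ) + 1 := by
      have := Nat.cast_nonneg (α := ℝ) n; linarith
    have h2 : (0:ℝ) < ((n:ℝ)+1) ^ (2:ℝ) := by positivity
    exact one_div_le_one_div_of_le h2 (Real.rpow_le_rpow_of_exponent_le h1 hs)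
  have hsum2 : Summable (fun n : ℕ => 1 / ((n:ℝ) + 1) ^ (2:ℝ)) := by
    simp_rw [Real.rpow_two]
    have := (Real.summable_one_div_nat_pow (p := 2)).mpr one_lt_two
    exact (summable_nat_add_iff 1).mpr this |>.congr (by intro n; push_cast; ring_nf)
  have hsum : Summable (fun n : ℕ => ‖(1 : ℂ) / ((n:ℂ) + 1) ^ s‖) := by
    refine Summable.of_nonneg_of_le (fun n => norm_nonneg _) (fun n => ?_) hsum2
    rw [hterm n]; exact hle n
  refine le_trans (norm_tsum_le_tsum_norm hsum) ?_
  have hts : ∑' n : ℕ, ‖(1 : ℂ) / ((n:ℂ) + 1) ^ s‖ ≤ ∑' n : ℕ, 1 / ((n:ℝ) + 1) ^ (2:ℝ) := by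
    refine Summable.tsum_le_tsum (fun n => ?_) hsum hsum2
    rw [hterm n]; exact hle n
  refine hts.trans ?_
  have hbasel := hasSum_zeta_two
  have h0 : ∑' n : ℕ, (1:ℝ) / (n:ℝ) ^ 2 = π ^ 2 / 6 := hbasel.tsum_eq
  have hshift : ∑' n : ℕ, 1 / ((n:ℝ) + 1) ^ (2:ℝ) ≤ π ^ 2 / 6 := by
    rw [← h0]
    rw [Summable.tsum_eq_zero_add hbasel.summable]
    simp only [Nat.cast_zero, ne_eq, OfNat.ofNat_ne_zero, not_false_eq_true, zero_pow, div_zero,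
      zero_add]
    refine le_of_eq (tsum_congr fun n => ?_)
    rw [Real.rpow_two]
    push_cast
    ring_nf
  refine hshift.trans ?_
  nlinarith [Real.pi_lt_d2, Real.pi_pos]


set_option maxHeartbeats 1000000 in
/-- For every real `θ` with `|θ| < π`,
`log|ξ₁(r e^{iθ})| ≤ (1/4)√r (log r) cos(θ/2) + o(√r log r)` as `r → ∞`; equivalently,
`limsup_{r→∞} log|ξ₁(r e^{iθ})|/(√r log r) ≤ (1/4) cos(θ/2)`. -/
theorem xi1_indicator_upper_bound (xi1 : ℂ → ℂ) (hxi1 : Differentiable ℂ xi1)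
    (hfe : ∀ s : ℂ, xi1 (s ^ 2) = riemannXiFn (s + 1 / 2)) :
    ∀ θ : ℝ, |θ| < π → ∀ ε > (0 : ℝ), ∃ r₀ : ℝ, ∀ r : ℝ, r₀ ≤ r →
      Real.log ‖xi1 ((r : ℂ) * Complex.exp (Complex.I * (θ : ℂ)))‖ ≤
        (1 / 4) * Real.sqrt r * Real.log r * Real.cos (θ / 2) +
          ε * (Real.sqrt r * Real.log r) := by
  intro θ hθ ε hε
  obtain ⟨c, hcdef⟩ : ∃ c, c = Real.cos (θ/2) := ⟨_, rfl⟩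
  rw [← hcdef]
  have hθ' : -π < θ ∧ θ < π := abs_lt.mp hθ
  have hc : 0 < c := by
    rw [hcdef]
    exact Real.cos_pos_of_mem_Ioo ⟨by linarith [hθ'.1], by linarith [hθ'.2]⟩
  have hc1 : c ≤ 1 := by rw [hcdef]; exact Real.cos_le_one _
  refine ⟨max (max 3 (25/ε^2)) (16/c^2), fun r hr => ?_⟩
  have hr3 : (3:ℝ) ≤ r := le_trans (le_trans (le_max_left _ _) (le_max_left _ _)) hr
  have hrε : 25/ε^2 ≤ r := le_trans (le_trans (le_max_right _ _) (le_max_left _ _)) hr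
  have hrc : 16/c^2 ≤ r := le_trans (le_max_right _ _) hr
  have hr0 : (0:ℝ) < r := by linarith
  have hr1 : (1:ℝ) ≤ r := by linarith
  obtain ⟨q, hqdef⟩ : ∃ q, q = Real.sqrt r := ⟨_, rfl⟩
  have hq : q^2 = r := by rw [hqdef]; exact Real.sq_sqrt hr0.le
  have hq1 : 1 ≤ q := by
    rw [hqdef]; exact Real.one_le_sqrt.mpr hr1
  have hq0 : 0 < q := by linarith
  have hlog1 : 1 ≤ Real.log r := by
    rw [Real.le_log_iff_exp_le hr0]
    have := Real.exp_one_lt_d9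
    linarith
  have hεq : 5 ≤ ε * q := by
    have h25 : 25 ≤ ε^2 * q^2 := by
      rw [hq]
      rw [div_le_iff₀ (by positivity)] at hrε
      linarith
    nlinarith [mul_pos hε hq0, sq_nonneg (ε*q - 5), sq_nonneg (ε*q + 5)]
  have hcq : 4 ≤ c * q := by
    have h16 : 16 ≤ c^2 * q^2 := by
      rw [hq]
      rw [div_le_iff₀ (by positivity)] at hrc
      linarith
    nlinarith [mul_pos hc hq0, sq_nonneg (c*q - 4), sq_nonneg (c*q + 4)]
  -- the square root point
  obtain ⟨s, hsdef⟩ : ∃ s, s = (q : ℂ) * Complex.exp ((θ/2 : ℝ) * Complex.I) := ⟨_, rfl⟩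
  have hs2 : s^2 = (r:ℂ) * Complex.exp (Complex.I * (θ:ℂ)) := by
    rw [hsdef, mul_pow, ← Complex.exp_nat_mul]
    congr 1
    · rw [← Complex.ofReal_pow, hq]
    · push_cast; ring_nf
  obtain ⟨w, hwdef⟩ : ∃ w, w = s + 1/2 := ⟨_, rfl⟩
  have hsre : s.re = q * c := by
    rw [hsdef, Complex.mul_re, Complex.ofReal_re, Complex.ofReal_im,
      Complex.exp_ofReal_mul_I_re, zero_mul, sub_zero, hcdef]
  have hwre : w.re = q * c + 1/2 := by
    rw [hwdef, Complex.add_re, hsre]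
    norm_num
  have hsabs : ‖s‖ = q := by
    rw [hsdef, norm_mul, Complex.norm_real, Real.norm_eq_abs, abs_of_nonneg hq0.le, Complex.norm_exp]
    simp
  obtain ⟨x, hxdef⟩ : ∃ x, x = (q * c + 1/2)/2 := ⟨_, rfl⟩
  have hx2 : 2 ≤ x := by rw [hxdef]; nlinarith
  have hx1 : 1 ≤ x := by linarith
  have hxq : x ≤ q := by rw [hxdef]; nlinarith
  have hwre2 : 2 ≤ w.re := by rw [hwre]; nlinarith
  have hGx : 0 < Real.Gamma x := Real.Gamma_pos_of_pos (by linarith)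
  -- bound on |ξ(w)|
  have hw1 : ‖w‖ ≤ 2*q := by
    rw [hwdef]
    calc ‖(s + 1/2 : ℂ)‖ ≤ ‖s‖ + ‖(1/2 : ℂ)‖ := norm_add_le _ _
      _ ≤ q + 1/2 := by rw [hsabs]; norm_num
      _ ≤ 2*q := by linarith
  have hw2 : ‖w-1‖ ≤ 2*q := by
    have : w - 1 = s + (-1/2 : ℂ) := by rw [hwdef]; ring
    rw [this]
    calc ‖s + (-1/2:ℂ)‖ ≤ ‖s‖ + ‖(-1/2 : ℂ)‖ :=
          norm_add_le _ _
      _ ≤ q + 1/2 := by rw [hsabs]; norm_num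
      _ ≤ 2*q := by linarith
  have hw3 : ‖(π:ℂ) ^ (-w/2)‖ ≤ 1 := by
    rw [Complex.norm_cpow_eq_rpow_re_of_pos Real.pi_pos]
    refine Real.rpow_le_one_of_one_le_of_nonpos (by linarith [Real.pi_gt_three]) ?_
    have hre : ((-w/2 : ℂ)).re = -(w.re)/2 := by
      rw [show (2:ℂ) = ((2:ℝ):ℂ) by norm_num, Complex.div_ofReal_re, Complex.neg_re]
    rw [hre]
    linarith
  have hw4 : ‖Complex.Gamma (w/2)‖ ≤ Real.Gamma x := by
    have hre : (w/2 : ℂ).re = x := by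
      rw [show (2:ℂ) = ((2:ℝ):ℂ) by norm_num, Complex.div_ofReal_re, hwre, hxdef]
    have := abs_Gamma_le (z := w/2) (by rw [hre]; linarith)
    rwa [hre] at this
  have hw5 : ‖riemannZeta w‖ ≤ 2 := abs_zeta_le hwre2
  have habs : ‖riemannXiFn w‖ ≤ 8 * r * Real.Gamma x := by
    have h1 : ‖riemannXiFn w‖ = 1/2 * ‖w‖ * ‖w-1‖ *
        ‖(π:ℂ) ^ (-w/2)‖ * ‖Complex.Gamma (w/2)‖ *
        ‖riemannZeta w‖ := by
      rw [riemannXiFn, norm_mul, norm_mul, norm_mul, norm_mul, norm_mul]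
      norm_num
    rw [h1]
    have a1 : 1/2 * ‖w‖ ≤ 1/2 * (2*q) := by linarith
    have a2 : 1/2 * ‖w‖ * ‖w-1‖ ≤ 1/2 * (2*q) * (2*q) :=
      mul_le_mul a1 hw2 (norm_nonneg _) (by positivity)
    have a3 : 1/2 * ‖w‖ * ‖w-1‖ * ‖(π:ℂ) ^ (-w/2)‖ ≤
        1/2 * (2*q) * (2*q) * 1 :=
      mul_le_mul a2 hw3 (norm_nonneg _) (by positivity)
    have a4 : 1/2 * ‖w‖ * ‖w-1‖ * ‖(π:ℂ) ^ (-w/2)‖ *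
        ‖Complex.Gamma (w/2)‖ ≤ 1/2 * (2*q) * (2*q) * 1 * Real.Gamma x :=
      mul_le_mul a3 hw4 (norm_nonneg _) (by positivity)
    have a5 : 1/2 * ‖w‖ * ‖w-1‖ * ‖(π:ℂ) ^ (-w/2)‖ *
        ‖Complex.Gamma (w/2)‖ * ‖riemannZeta w‖ ≤
        1/2 * (2*q) * (2*q) * 1 * Real.Gamma x * 2 :=
      mul_le_mul a4 hw5 (norm_nonneg _) (by positivity)
    refine a5.trans ?_
    have : 1/2 * (2*q) * (2*q) * 1 * Real.Gamma x * 2 = 4 * q^2 * Real.Gamma x := by ring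
    rw [this, hq]
    nlinarith
  -- rewrite the goal
  rw [← hs2, hfe s, ← hwdef, ← hqdef]
  -- log bound
  have hlogB : Real.log (8 * r * Real.Gamma x) ≤
      (1/4) * q * Real.log r * c + ε * (q * Real.log r) := by
    have hlogsplit : Real.log (8 * r * Real.Gamma x) =
        Real.log 8 + Real.log r + Real.log (Real.Gamma x) := by
      rw [Real.log_mul (by positivity) (by positivity),
        Real.log_mul (by positivity) (by positivity)]
    have h8 : Real.log 8 ≤ 3 := by
      rw [show (3:ℝ) = Real.log (Real.exp 3) by rw [Real.log_exp]]
      refine Real.log_le_log (by norm_num) ?_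
      have h := Real.exp_one_gt_d9
      calc (8:ℝ) ≤ 2.7^3 := by norm_num
        _ ≤ (Real.exp 1)^3 := by
          have : (2.7:ℝ) ≤ Real.exp 1 := by linarith
          exact pow_le_pow_left₀ (by norm_num) this 3
        _ = Real.exp 3 := by
          rw [← Real.exp_nat_mul]
          norm_num
    have hlogG : Real.log (Real.Gamma x) ≤ x * Real.log x := by
      calc Real.log (Real.Gamma x) ≤ Real.log (x ^ x) :=
            Real.log_le_log hGx (Gamma_le_rpow_self hx1)
        _ = x * Real.log x := Real.log_rpow (by linarith) x
    have hlogx : Real.log x ≤ Real.log r / 2 := by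
      calc Real.log x ≤ Real.log q := Real.log_le_log (by linarith) hxq
        _ = Real.log r / 2 := by rw [hqdef, Real.log_sqrt hr0.le]
    have hxlogx : x * Real.log x ≤ (1/4) * q * c * Real.log r + (1/8) * Real.log r := by
      calc x * Real.log x ≤ x * (Real.log r / 2) :=
            mul_le_mul_of_nonneg_left hlogx (by linarith)
        _ = (1/4) * q * c * Real.log r + (1/8) * Real.log r := by
            rw [hxdef]; ring
    rw [hlogsplit]
    have hfinal : 3 + Real.log r + (1/8) * Real.log r ≤ ε * (q * Real.log r) := by
      nlinarith [mul_le_mul_of_nonneg_right hεq (by linarith : (0:ℝ) ≤ Real.log r)]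
    nlinarith
  -- combine
  by_cases h0 : ‖riemannXiFn w‖ = 0
  · rw [h0, Real.log_zero]
    have : 0 ≤ (1/4) * q * Real.log r * c + ε * (q * Real.log r) := by positivity
    linarith [this]
  · have hpos : 0 < ‖riemannXiFn w‖ :=
      lt_of_le_of_ne (norm_nonneg _) (Ne.symm h0)
    calc Real.log (‖riemannXiFn w‖) ≤ Real.log (8 * r * Real.Gamma x) :=
          Real.log_le_log hpos habs
      _ ≤ (1/4) * q * Real.log r * c + ε * (q * Real.log r) := hlogB
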